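/- Let q, d ≥ 2 be integers with d dividing q, and let x be an integer. Then the density δ(q, d; 1, 0, 0, 0, x) exists and equals (1/d²)·Σ_{f ∣ gcd(x,d)} f·φ(d/f), where the sum runs over the positive divisors f of gcd(x, d) and φ is Euler's totient function. That is, lim_{N→∞} (1/N)·|{n < N : u_q(n) + x ≡ 0 (mod d)}| = (1/d²)·Σ_{f ∣ gcd(x,d)} f·φ(d/f). -/

import Mathlib

open Filter

/-- `vq q n` is the `q`-adic valuation: `0` if `n = 0`, and otherwise the
largest `k` such that `q ^ k` divides `n`. -/
noncomputable def vq (q n : ℕ) : ℕ := if n = 0 then 0 else sSup {k : ℕ | q ^ k ∣ n}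

/-- `wq q n = ∑_{i=0}^n vq q i`. -/
noncomputable def wq (q n : ℕ) : ℕ := ∑ i ∈ Finset.range (n + 1), vq q i

/-- `uq q n = ∑_{i=0}^n wq q i`. -/
noncomputable def uq (q n : ℕ) : ℕ := ∑ i ∈ Finset.range (n + 1), wq q i

section aux

open Finset

lemma vq_eq {q : ℕ} (hq : 2 ≤ q) {n a : ℕ} (h1 : q ^ a ∣ n) (h2 : ¬ q ^ (a + 1) ∣ n) :
    vq q n = a := by
  have hn : n ≠ 0 := by rintro rfl; exact h2 (dvd_zero _)
  rw [vq, if_neg hn]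
  have hub : a ∈ upperBounds {k : ℕ | q ^ k ∣ n} := by
    intro k hk
    by_contra h
    push_neg at h
    exact h2 ((pow_dvd_pow q h).trans hk)
  exact le_antisymm (csSup_le ⟨a, h1⟩ hub) (le_csSup ⟨a, hub⟩ h1)

lemma vq_spec {q : ℕ} (hq : 2 ≤ q) {n : ℕ} (hn : n ≠ 0) :
    q ^ vq q n ∣ n ∧ ¬ q ^ (vq q n + 1) ∣ n := by
  have hbdd : BddAbove {k : ℕ | q ^ k ∣ n} := by
    refine ⟨n, fun k hk => ?_⟩
    calc k ≤ q ^ k := Nat.le_of_lt (Nat.lt_pow_self hq (n := k))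
    _ ≤ n := Nat.le_of_dvd (Nat.pos_of_ne_zero hn) hk
  have hne : ({k : ℕ | q ^ k ∣ n}).Nonempty := ⟨0, by simp⟩
  have hmem := Nat.sSup_mem hne hbdd
  rw [vq, if_neg hn]
  refine ⟨hmem, fun h => ?_⟩
  have := le_csSup hbdd (by exact h : sSup {k : ℕ | q ^ k ∣ n} + 1 ∈ {k : ℕ | q ^ k ∣ n})
  omega

lemma vq_of_not_dvd {q : ℕ} (hq : 2 ≤ q) {n : ℕ} (h : ¬ q ∣ n) : vq q n = 0 :=
  vq_eq hq (by simp) (by simpa using h)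

lemma vq_q_mul {q : ℕ} (hq : 2 ≤ q) {k : ℕ} (hk : k ≠ 0) : vq q (q * k) = vq q k + 1 := by
  obtain ⟨h1, h2⟩ := vq_spec hq hk
  have hq0 : q ≠ 0 := by omega
  refine vq_eq hq ?_ ?_
  · rw [pow_succ']
    exact mul_dvd_mul_left q h1
  · rw [pow_succ']
    rw [mul_dvd_mul_iff_left hq0]
    exact h2

lemma wq_zero (q : ℕ) : wq q 0 = 0 := by simp [wq, vq]

lemma wq_succ (q n : ℕ) : wq q (n + 1) = wq q n + vq q (n + 1) :=
  Finset.sum_range_succ _ _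

lemma uq_succ (q n : ℕ) : uq q (n + 1) = uq q n + wq q (n + 1) :=
  Finset.sum_range_succ _ _

lemma wq_add_lt {q : ℕ} (hq : 2 ≤ q) (m : ℕ) : ∀ {r : ℕ}, r < q → wq q (q * m + r) = wq q (q * m)
  | 0, _ => by rw [Nat.add_zero]
  | (r+1), hr => by
    have h1 : q * m + (r + 1) = (q * m + r) + 1 := by omega
    rw [h1, wq_succ, wq_add_lt hq m (by omega : r < q), vq_of_not_dvd hq, Nat.add_zero]
    intro h
    have h2 : q ∣ (q * m + r + 1 - q * m) := Nat.dvd_sub h (Dvd.intro m rfl)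
    have h3 : q * m + r + 1 - q * m = r + 1 := by omega
    rw [h3] at h2
    have := Nat.le_of_dvd (by omega) h2
    omega

lemma wq_q_mul {q : ℕ} (hq : 2 ≤ q) (m : ℕ) : wq q (q * m) = m + wq q m := by
  induction m with
  | zero => simp [wq_zero]
  | succ m ih =>
    have h1 : q * (m + 1) = (q * m + (q - 1)) + 1 := by
      have : 1 ≤ q := by omega
      cases' Nat.exists_eq_add_of_le this with k hk
      subst hk; ring_nf; omega
    rw [h1, wq_succ, wq_add_lt hq m (by omega : q - 1 < q), ← h1,
      vq_q_mul hq (by omega : m + 1 ≠ 0), ih, wq_succ]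
    ring

lemma wq_mul_add {q : ℕ} (hq : 2 ≤ q) (m : ℕ) {r : ℕ} (hr : r < q) :
    wq q (q * m + r) = m + wq q m := by
  rw [wq_add_lt hq m hr, wq_q_mul hq]

lemma uq_modeq {q d : ℕ} (hq : 2 ≤ q) (hdq : d ∣ q) (n : ℕ) :
    uq q n ≡ (n + 1) * wq q n [MOD d] := by
  induction n with
  | zero =>
    have h1 : uq q 0 = 0 := by simp [uq, wq, vq]
    have h2 : wq q 0 = 0 := wq_zero q
    rw [h1, h2, Nat.mul_zero]
  | succ n ih =>
    rw [uq_succ]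
    by_cases h : q ∣ (n + 1)
    · have hd1 : (n + 1) ≡ 0 [MOD d] := (Nat.modEq_zero_iff_dvd).mpr (dvd_trans hdq h)
      have step1 : uq q n + wq q (n + 1) ≡ 0 * wq q n + wq q (n + 1) [MOD d] :=
        Nat.ModEq.add_right _ (ih.trans (Nat.ModEq.mul_right _ hd1))
      have step2 : (0 : ℕ) * wq q n + wq q (n + 1) = 1 * wq q (n + 1) := by ring
      have step3 : (1 : ℕ) * wq q (n + 1) ≡ ((n + 1) + 1) * wq q (n + 1) [MOD d] :=
        Nat.ModEq.mul_right _ (by simpa using (Nat.ModEq.add_right 1 hd1).symm)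
      exact (step1.trans (step2 ▸ step3))
    · have hv : vq q (n + 1) = 0 := vq_of_not_dvd hq h
      have hw : wq q (n + 1) = wq q n := by rw [wq_succ, hv, Nat.add_zero]
      rw [hw]
      calc uq q n + wq q n ≡ (n + 1) * wq q n + wq q n [MOD d] := Nat.ModEq.add_right _ ih
        _ = ((n + 1) + 1) * wq q n := by ring

lemma sum_range_mul' {M : Type*} [AddCommMonoid M] (f : ℕ → M) (a b : ℕ) :
    ∑ t ∈ Finset.range (a * b), f t = ∑ i ∈ Finset.range a, ∑ j ∈ Finset.range b, f (b * i + j) := by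
  induction a with
  | zero => simp
  | succ a ih =>
    have h1 : (a + 1) * b = a * b + b := by ring
    rw [h1, Finset.sum_range_add, ih, Finset.sum_range_succ]
    congr 1
    refine Finset.sum_congr rfl fun j _ => ?_
    congr 1
    ring

lemma dvd_iff_of_dvd_sub {d a b : ℤ} (h : d ∣ a - b) : d ∣ a ↔ d ∣ b := by
  constructor
  · intro h'; have := dvd_sub h' h; simpa using this
  · intro h'; have := dvd_add h h'; simpa using this

lemma lin_count {D : ℕ} (hD : 0 < D) (A : ℕ) (c : ℤ) :
    (∑ b ∈ Finset.range D, if (D : ℤ) ∣ ((A : ℤ) * b + c) then 1 else 0) =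
      (if ((Nat.gcd A D : ℤ) ∣ c) then (Nat.gcd A D) else 0) := by
  set g := Nat.gcd A D with hg
  have hg0 : 0 < g := Nat.gcd_pos_of_pos_right _ hD
  by_cases hc : ((g : ℤ) ∣ c)
  · rw [if_pos hc]
    obtain ⟨c', rfl⟩ := hc
    set D' := D / g with hD'
    set A' := A / g with hA'
    have hDg : D = g * D' := (Nat.mul_div_cancel' (Nat.gcd_dvd_right A D)).symm
    have hAg : A = g * A' := (Nat.mul_div_cancel' (Nat.gcd_dvd_left A D)).symm
    have hD'0 : 0 < D' := by
      rcases Nat.eq_zero_or_pos D' with h | h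
      · rw [h, mul_zero] at hDg; omega
      · exact h
    haveI : NeZero D' := ⟨by omega⟩
    have hcop : Nat.Coprime A' D' := Nat.coprime_div_gcd_div_gcd hg0
    have hred : ∀ b : ℕ, ((D : ℤ) ∣ ((A : ℤ) * b + (g : ℤ) * c')) ↔ ((D' : ℤ) ∣ ((A' : ℤ) * b + c')) := by
      intro b
      have h1 : ((A : ℤ) * b + (g : ℤ) * c') = (g : ℤ) * ((A' : ℤ) * b + c') := by
        rw [hAg]; push_cast; ring
      rw [h1, hDg]
      push_cast
      rw [mul_dvd_mul_iff_left (by exact_mod_cast hg0.ne' : (g : ℤ) ≠ 0)]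
    have hu : IsUnit ((A' : ZMod D')) := (ZMod.isUnit_iff_coprime A' D').mpr hcop
    obtain ⟨u, hu'⟩ := hu
    set β : ZMod D' := ↑u⁻¹ * (-(c' : ZMod D')) with hβ
    have hsol : ∀ b : ℕ, ((D' : ℤ) ∣ ((A' : ℤ) * b + c')) ↔ ((b : ZMod D') = β) := by
      intro b
      rw [← ZMod.intCast_zmod_eq_zero_iff_dvd]
      push_cast
      constructor
      · intro h
        have h2 : (A' : ZMod D') * (b : ZMod D') = -(c' : ZMod D') := by linear_combination h
        rw [hβ, ← h2, ← hu', ← mul_assoc, Units.inv_mul, one_mul]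
      · intro h
        rw [h, hβ, ← hu', ← mul_assoc, Units.mul_inv, one_mul]
        ring
    calc (∑ b ∈ Finset.range D, if (D : ℤ) ∣ ((A : ℤ) * b + (g:ℤ) * c') then 1 else 0)
        = ∑ b ∈ Finset.range (g * D'), if ((b : ZMod D') = β) then 1 else 0 := by
          rw [← hDg]
          refine Finset.sum_congr rfl fun b _ => ?_
          simp only [hred b, hsol b]
      _ = ∑ i ∈ Finset.range g, ∑ j ∈ Finset.range D', if (((D' * i + j : ℕ) : ZMod D') = β) then 1 else 0 := by
          rw [sum_range_mul']
      _ = ∑ i ∈ Finset.range g, ∑ j ∈ Finset.range D', if ((j : ZMod D') = β) then 1 else 0 := by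
          refine Finset.sum_congr rfl fun i _ => Finset.sum_congr rfl fun j _ => ?_
          congr 2
          push_cast
          simp
      _ = ∑ i ∈ Finset.range g, 1 := by
          refine Finset.sum_congr rfl fun i _ => ?_
          have hval : ∀ j ∈ Finset.range D', (((j : ℕ) : ZMod D') = β) ↔ j = β.val := by
            intro j hj
            constructor
            · intro h; rw [← h, ZMod.val_cast_of_lt (Finset.mem_range.mp hj)]
            · intro h; rw [h, ZMod.natCast_val, ZMod.cast_id]
          rw [Finset.sum_congr rfl (fun j hj => by rw [if_congr (hval j hj) rfl rfl])]
          rw [Finset.sum_ite_eq' (Finset.range D') β.val (fun _ => (1:ℕ))]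
          rw [if_pos (Finset.mem_range.mpr (ZMod.val_lt β))]
      _ = g := by simp
  · rw [if_neg hc]
    refine Finset.sum_eq_zero fun b _ => ?_
    rw [if_neg]
    intro h
    have h1 : (g : ℤ) ∣ (A : ℤ) * b := Dvd.dvd.mul_right (by exact_mod_cast Nat.gcd_dvd_left A D) _
    have h2 : (g : ℤ) ∣ (D : ℤ) := by exact_mod_cast Nat.gcd_dvd_right A D
    exact hc (by simpa using dvd_sub (h2.trans h) h1)

end aux
lemma card_gcd_eq_totient {d : ℕ} (hd : 0 < d) {f : ℕ} (hf : f ∣ d) :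
    ((Finset.range d).filter (fun a => Nat.gcd a d = f)).card = Nat.totient (d / f) := by
  have hf0 : 0 < f := Nat.pos_of_dvd_of_pos hf hd
  rw [Nat.totient_eq_card_coprime]
  apply Finset.card_bij' (fun a _ => a / f) (fun b _ => f * b)
  · intro a ha
    obtain ⟨ha1, ha2⟩ := Finset.mem_filter.mp ha
    have haf : f ∣ a := ha2 ▸ Nat.gcd_dvd_left a d
    refine Finset.mem_filter.mpr ⟨Finset.mem_range.mpr ?_, ?_⟩
    · exact Nat.div_lt_div_of_lt_of_dvd hf (Finset.mem_range.mp ha1)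
    · have := Nat.coprime_div_gcd_div_gcd (m := a) (n := d) (ha2 ▸ hf0)
      rw [ha2] at this
      exact this.symm
  · intro b hb
    obtain ⟨hb1, hb2⟩ := Finset.mem_filter.mp hb
    refine Finset.mem_filter.mpr ⟨Finset.mem_range.mpr ?_, ?_⟩
    · calc f * b < f * (d / f) := (Nat.mul_lt_mul_left hf0).mpr (Finset.mem_range.mp hb1)
      _ = d := Nat.mul_div_cancel' hf
    · conv_lhs => rw [show d = f * (d / f) from (Nat.mul_div_cancel' hf).symm]
      rw [Nat.gcd_mul_left, Nat.Coprime.gcd_eq_one hb2.symm, Nat.mul_one]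
  · intro a ha
    obtain ⟨_, ha2⟩ := Finset.mem_filter.mp ha
    exact Nat.mul_div_cancel' (ha2 ▸ Nat.gcd_dvd_left a d)
  · intro b _
    exact Nat.mul_div_cancel_left b hf0

lemma sum_shift {d : ℕ} (W : ℕ → ℕ) (hW : W d = W 0) :
    ∑ a ∈ Finset.range d, W (a + 1) = ∑ a ∈ Finset.range d, W a := by
  have h1 := Finset.sum_range_succ' W d
  have h2 := Finset.sum_range_succ W d
  omega

lemma K_eq {d : ℕ} (hd : 0 < d) (x : ℤ) :
    (∑ a ∈ Finset.range d, if ((Nat.gcd a d : ℤ) ∣ x) then Nat.gcd a d else 0)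
      = ∑ f ∈ (Int.gcd x (d : ℤ)).divisors, f * Nat.totient (d / f) := by
  rw [← Finset.sum_fiberwise_of_maps_to (g := fun a => Nat.gcd a d) (t := d.divisors)
    (fun a _ => Nat.mem_divisors.mpr ⟨Nat.gcd_dvd_right a d, hd.ne'⟩)]
  have step1 : ∀ f ∈ d.divisors,
      (∑ a ∈ (Finset.range d).filter (fun a => Nat.gcd a d = f),
        if ((Nat.gcd a d : ℤ) ∣ x) then Nat.gcd a d else 0)
      = Nat.totient (d / f) * (if ((f : ℤ) ∣ x) then f else 0) := by
    intro f hf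
    have hfd : f ∣ d := (Nat.mem_divisors.mp hf).1
    rw [Finset.sum_congr rfl (fun a ha => by
      rw [(Finset.mem_filter.mp ha).2])]
    rw [Finset.sum_const, card_gcd_eq_totient hd hfd, smul_eq_mul]
  rw [Finset.sum_congr rfl step1]
  have step2 : ∀ f ∈ d.divisors,
      Nat.totient (d / f) * (if ((f : ℤ) ∣ x) then f else 0)
      = if ((f : ℤ) ∣ x) then f * Nat.totient (d / f) else 0 := by
    intro f _
    split_ifs <;> ring
  rw [Finset.sum_congr rfl step2, ← Finset.sum_filter]
  congr 1
  ext f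
  simp only [Finset.mem_filter, Nat.mem_divisors, Int.gcd]
  constructor
  · rintro ⟨⟨hfd, hd0⟩, hfx⟩
    refine ⟨Nat.dvd_gcd ?_ (by simpa using hfd), ?_⟩
    · rwa [← Int.natCast_dvd]
    · have : d ≠ 0 := by simpa using hd0
      simp [Nat.gcd_eq_zero_iff]
      omega
  · rintro ⟨hfg, hg0⟩
    have h1 := Nat.dvd_gcd_iff.mp (by simpa using hfg)
    refine ⟨⟨by simpa using h1.2, hd.ne'⟩, ?_⟩
    rw [Int.natCast_dvd]
    exact h1.1
lemma cond_iff {q d : ℕ} (hq : 2 ≤ q) (hdq : d ∣ q) (x : ℤ) (m c1 c0 : ℕ)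
    (hc1 : c1 < q) (hc0 : c0 < q) :
    (((uq q (q * q * m + (q * c1 + c0)) : ℤ) + x) % (d : ℤ) = 0 ↔
      (d : ℤ) ∣ (((c0 : ℤ) + 1) * ((c1 : ℤ) + ((m : ℤ) + (wq q m : ℤ))) + x)) := by
  set n := q * q * m + (q * c1 + c0) with hn
  have hwn : wq q n = (q * m + c1) + (m + wq q m) := by
    have h1 : n = q * (q * m + c1) + c0 := by rw [hn]; ring
    rw [h1, wq_mul_add hq _ hc0, wq_mul_add hq _ hc1]
  rw [← Int.dvd_iff_emod_eq_zero]
  have hmod := uq_modeq hq hdq n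
  have hdvd1 : (d : ℤ) ∣ ((uq q n : ℤ) + x) - ((((n : ℤ) + 1) * (wq q n : ℤ)) + x) := by
    have h2 := (Nat.modEq_iff_dvd.mp hmod)
    have h3 : ((uq q n : ℤ) + x) - ((((n : ℤ) + 1) * (wq q n : ℤ)) + x)
        = -(((((n : ℕ) + 1) * wq q n : ℕ) : ℤ) - (uq q n : ℤ)) := by push_cast; ring
    rw [h3]
    exact dvd_neg.mpr h2
  rw [dvd_iff_of_dvd_sub hdvd1]
  apply dvd_iff_of_dvd_sub
  have hΔ : (((n : ℤ) + 1) * (wq q n : ℤ) + x)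
      - ((((c0 : ℤ) + 1) * ((c1 : ℤ) + ((m : ℤ) + (wq q m : ℤ)))) + x)
      = (q : ℤ) * (((n : ℤ) + 1) * m + ((q : ℤ) * m + c1) * ((c1 : ℤ) + ((m : ℤ) + (wq q m : ℤ)))) := by
    rw [hwn, hn]
    push_cast
    ring
  rw [hΔ]
  exact Dvd.dvd.mul_right (Int.natCast_dvd_natCast.mpr hdq) _

lemma block_count {q d : ℕ} (hq : 2 ≤ q) (hd : 2 ≤ d) (hdq : d ∣ q) (x : ℤ) (m : ℕ) :
    (∑ t ∈ Finset.range (q * q),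
        if ((uq q (q * q * m + t) : ℤ) + x) % (d : ℤ) = 0 then 1 else 0)
      = (q / d) * (q / d) *
        ∑ a ∈ Finset.range d, (if ((Nat.gcd a d : ℤ) ∣ x) then Nat.gcd a d else 0) := by
  have hd0 : 0 < d := by omega
  have hqd : (q / d) * d = q := Nat.div_mul_cancel hdq
  set s : ℤ := (m : ℤ) + (wq q m : ℤ) with hs
  rw [sum_range_mul']
  have step1 : ∀ c1 ∈ Finset.range q, ∀ c0 ∈ Finset.range q,
      (if ((uq q (q * q * m + (q * c1 + c0)) : ℤ) + x) % (d : ℤ) = 0 then (1:ℕ) else 0)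
        = if (d : ℤ) ∣ (((c0 : ℤ) + 1) * ((c1 : ℤ) + s) + x) then 1 else 0 := by
    intro c1 hc1 c0 hc0
    rw [if_congr (cond_iff hq hdq x m c1 c0 (Finset.mem_range.mp hc1) (Finset.mem_range.mp hc0)) rfl rfl]
  rw [Finset.sum_congr rfl (fun c1 hc1 => Finset.sum_congr rfl (step1 c1 hc1))]
  -- inner sums over c0
  have inner : ∀ A : ℤ, (∑ c0 ∈ Finset.range q, if (d:ℤ) ∣ (((c0:ℤ) + 1) * A + x) then (1:ℕ) else 0)
      = (q / d) * ∑ j ∈ Finset.range d, (if (d:ℤ) ∣ (((j:ℤ) + 1) * A + x) then (1:ℕ) else 0) := by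
    intro A
    have hpt : ∀ i ∈ Finset.range (q/d), ∀ j ∈ Finset.range d,
        (if (d:ℤ) ∣ ((((d * i + j : ℕ) : ℤ) + 1) * A + x) then (1:ℕ) else 0)
          = if (d:ℤ) ∣ (((j:ℤ) + 1) * A + x) then 1 else 0 := by
      intro i _ j _
      refine if_congr (dvd_iff_of_dvd_sub ⟨i * A, by push_cast; ring⟩) rfl rfl
    conv_lhs => rw [show q = (q/d)*d from hqd.symm]
    rw [sum_range_mul', Finset.sum_congr rfl (fun i hi => Finset.sum_congr rfl (hpt i hi)),
      Finset.sum_const, smul_eq_mul, Finset.card_range]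
  rw [show (∑ c1 ∈ Finset.range q, ∑ c0 ∈ Finset.range q,
      if (d:ℤ) ∣ (((c0:ℤ) + 1) * ((c1:ℤ) + s) + x) then (1:ℕ) else 0)
    = ∑ c1 ∈ Finset.range q,
      (q / d) * ∑ j ∈ Finset.range d, (if (d:ℤ) ∣ (((j:ℤ) + 1) * ((c1:ℤ) + s) + x) then (1:ℕ) else 0)
    from Finset.sum_congr rfl (fun c1 _ => inner ((c1 : ℤ) + s))]
  -- outer sum over c1
  have hout : (∑ c1 ∈ Finset.range q,
      ∑ j ∈ Finset.range d, (if (d:ℤ) ∣ (((j:ℤ) + 1) * ((c1:ℤ) + s) + x) then (1:ℕ) else 0))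
      = (q / d) * ∑ b ∈ Finset.range d,
        ∑ j ∈ Finset.range d, (if (d:ℤ) ∣ (((j:ℤ) + 1) * ((b:ℤ) + s) + x) then (1:ℕ) else 0) := by
    have hpt : ∀ i ∈ Finset.range (q/d), ∀ b ∈ Finset.range d,
        (∑ j ∈ Finset.range d, if (d:ℤ) ∣ (((j:ℤ) + 1) * (((d * i + b : ℕ) : ℤ) + s) + x) then (1:ℕ) else 0)
          = ∑ j ∈ Finset.range d, if (d:ℤ) ∣ (((j:ℤ) + 1) * ((b:ℤ) + s) + x) then (1:ℕ) else 0 := by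
      intro i _ b _
      refine Finset.sum_congr rfl (fun j _ => ?_)
      refine if_congr (dvd_iff_of_dvd_sub ⟨(j + 1) * i, by push_cast; ring⟩) rfl rfl
    conv_lhs => rw [show q = (q/d)*d from hqd.symm]
    rw [sum_range_mul', Finset.sum_congr rfl (fun i hi => Finset.sum_congr rfl (hpt i hi)),
      Finset.sum_const, smul_eq_mul, Finset.card_range]
  rw [← Finset.mul_sum, hout, ← mul_assoc]
  congr 1
  -- the core count over a complete block
  rw [Finset.sum_comm]
  have hfix : ∀ j ∈ Finset.range d,
      (∑ b ∈ Finset.range d, if (d:ℤ) ∣ (((j:ℤ) + 1) * ((b:ℤ) + s) + x) then (1:ℕ) else 0)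
      = if ((Nat.gcd (j+1) d : ℤ) ∣ x) then Nat.gcd (j+1) d else 0 := by
    intro j _
    have h1 : ∀ b ∈ Finset.range d, (if (d:ℤ) ∣ (((j:ℤ) + 1) * ((b:ℤ) + s) + x) then (1:ℕ) else 0)
        = if (d:ℤ) ∣ (((j + 1 : ℕ) : ℤ) * (b : ℤ) + (((j + 1 : ℕ) : ℤ) * s + x)) then 1 else 0 := by
      intro b _
      refine if_congr (by rw [show (((j:ℤ) + 1) * ((b:ℤ) + s) + x)
        = (((j + 1 : ℕ) : ℤ) * (b : ℤ) + (((j + 1 : ℕ) : ℤ) * s + x)) from by push_cast; ring]) rfl rfl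
    rw [Finset.sum_congr rfl h1, lin_count hd0 (j+1) ((((j + 1 : ℕ) : ℤ)) * s + x)]
    have h2 : ((Nat.gcd (j+1) d : ℤ) ∣ ((((j + 1 : ℕ) : ℤ)) * s + x)) ↔ ((Nat.gcd (j+1) d : ℤ) ∣ x) := by
      apply dvd_iff_of_dvd_sub
      rw [show ((((j + 1 : ℕ) : ℤ)) * s + x) - x = (((j + 1 : ℕ) : ℤ)) * s from by ring]
      exact Dvd.dvd.mul_right (Int.natCast_dvd_natCast.mpr (Nat.gcd_dvd_left _ _)) _
    rw [if_congr h2 rfl rfl]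
  rw [show (∑ j ∈ Finset.range d, ∑ b ∈ Finset.range d,
      if (d:ℤ) ∣ (((j:ℤ) + 1) * ((b:ℤ) + s) + x) then (1:ℕ) else 0)
    = ∑ j ∈ Finset.range d, (if ((Nat.gcd (j+1) d : ℤ) ∣ x) then Nat.gcd (j+1) d else 0)
    from Finset.sum_congr rfl hfix]
  exact sum_shift (fun a => if ((Nat.gcd a d : ℤ) ∣ x) then Nat.gcd a d else 0)
    (by simp [Nat.gcd_self, Nat.gcd_zero_left])
theorem stmt_14 (q d : ℕ) (hq : 2 ≤ q) (hd : 2 ≤ d) (hdq : d ∣ q) (x : ℤ) :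
    Tendsto
      (fun N : ℕ =>
        (((Finset.range N).filter fun n =>
            ((uq q n : ℤ) + x) % (d : ℤ) = 0).card : ℝ) / N)
      atTop
      (nhds ((1 / (d : ℝ) ^ 2) *
        ∑ f ∈ (Int.gcd x (d : ℤ)).divisors, (f : ℝ) * Nat.totient (d / f))) := by
  have hd0 : 0 < d := by omega
  have hq0 : 0 < q := by omega
  have hB : 0 < q * q := by positivity
  set K : ℕ := ∑ a ∈ Finset.range d, (if ((Nat.gcd a d : ℤ) ∣ x) then Nat.gcd a d else 0) with hK
  set B : ℕ := q * q with hBdef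
  set A : ℕ := (q / d) * (q / d) * K with hA
  set F : ℕ → ℕ :=
    fun N => ((Finset.range N).filter fun n => ((uq q n : ℤ) + x) % (d : ℤ) = 0).card with hF
  set c : ℝ := (K : ℝ) / (d : ℝ) ^ 2 with hc
  have hdR : ((d : ℝ)) ≠ 0 := by positivity
  have hBR : ((B : ℝ)) > 0 := by
    rw [hBdef]; push_cast; positivity
  -- the limit value is c
  have hval : (1 / (d : ℝ) ^ 2) *
      ∑ f ∈ (Int.gcd x (d : ℤ)).divisors, (f : ℝ) * Nat.totient (d / f) = c := by
    have h1 : ((K : ℕ) : ℝ) = ∑ f ∈ (Int.gcd x (d : ℤ)).divisors, (f : ℝ) * Nat.totient (d / f) := by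
      rw [hK, K_eq hd0 x]
      push_cast
      rfl
    rw [hc, ← h1]
    ring
  rw [hval]
  -- exact count on blocks
  have hFmul : ∀ M : ℕ, F (M * B) = M * A := by
    intro M
    rw [hF]
    simp only
    rw [Finset.card_filter, hBdef, sum_range_mul']
    rw [show (∑ i ∈ Finset.range M, ∑ j ∈ Finset.range (q * q),
        if ((uq q (q * q * i + j) : ℤ) + x) % (d : ℤ) = 0 then 1 else 0)
      = ∑ i ∈ Finset.range M, ((q / d) * (q / d) * K)
      from Finset.sum_congr rfl (fun i _ => block_count hq hd hdq x i)]
    rw [Finset.sum_const, smul_eq_mul, Finset.card_range, hA]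
  have hmono : Monotone F := fun N1 N2 h =>
    Finset.card_le_card (Finset.filter_subset_filter _ (Finset.range_subset_range.mpr h))
  -- A = B * c over ℝ
  have hAc : (A : ℝ) = (B : ℝ) * c := by
    rw [hA, hBdef, hc]
    have hqd : ((q / d : ℕ) : ℝ) = (q : ℝ) / (d : ℝ) := Nat.cast_div hdq hdR
    push_cast [hqd]
    field_simp
  -- two-sided bounds
  have key : ∀ N : ℕ, (N : ℝ) * c - A ≤ (F N : ℝ) ∧ (F N : ℝ) ≤ (N : ℝ) * c + A := by
    intro N
    set M : ℕ := N / B with hM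
    have h1 : B * M + N % B = N := Nat.div_add_mod N B
    have h2 : N % B < B := Nat.mod_lt _ hB
    have e1 : M * B ≤ N := by rw [Nat.mul_comm]; omega
    have e2 : N ≤ (M + 1) * B := by
      have e3 : (M + 1) * B = B * M + B := by ring
      omega
    have hlow : M * A ≤ F N := by
      rw [← hFmul M]
      exact hmono e1
    have hhigh : F N ≤ (M + 1) * A := by
      rw [← hFmul (M + 1)]
      exact hmono e2
    have hMle : (M : ℝ) * (B : ℝ) ≤ (N : ℝ) := by exact_mod_cast e1
    have hNle : (N : ℝ) ≤ ((M : ℝ) + 1) * (B : ℝ) := by exact_mod_cast e2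
    have hcnn : 0 ≤ c := by
      rw [hc]; positivity
    constructor
    · have h3 : (F N : ℝ) ≥ (M : ℝ) * A := by exact_mod_cast hlow
      have h4 : (M : ℝ) * (A : ℝ) = ((M : ℝ) * B) * c := by rw [hAc]; ring
      nlinarith
    · have h3 : (F N : ℝ) ≤ ((M : ℝ) + 1) * A := by exact_mod_cast hhigh
      have h4 : ((M : ℝ) + 1) * (A : ℝ) = (((M : ℝ) + 1) * B) * c := by rw [hAc]; ring
      nlinarith
  -- squeeze
  have hlo : Tendsto (fun N : ℕ => c - (A : ℝ) / N) atTop (nhds c) := by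
    simpa using (tendsto_const_div_atTop_nhds_zero_nat (A : ℝ)).const_sub c
  have hhi : Tendsto (fun N : ℕ => c + (A : ℝ) / N) atTop (nhds c) := by
    simpa using (tendsto_const_div_atTop_nhds_zero_nat (A : ℝ)).const_add c
  show Tendsto (fun N : ℕ => (F N : ℝ) / N) atTop (nhds c)
  refine tendsto_of_tendsto_of_tendsto_of_le_of_le' hlo hhi ?_ ?_
  · refine Filter.eventually_atTop.mpr ⟨1, fun N hN => ?_⟩
    have hN0 : (0 : ℝ) < N := by exact_mod_cast hN
    have h := (key N).1
    have e : c - (A : ℝ) / N = ((N : ℝ) * c - A) / N := by field_simp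
    rw [e]
    gcongr
  · refine Filter.eventually_atTop.mpr ⟨1, fun N hN => ?_⟩
    have hN0 : (0 : ℝ) < N := by exact_mod_cast hN
    have h := (key N).2
    have e : c + (A : ℝ) / N = ((N : ℝ) * c + A) / N := by field_simp
    rw [e]
    gcongr
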